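/- Let κ > 0 and α ∈ (0, κ/(κ+1)). Let μ_t^α be the α-stable subordinator law with Laplace transform e^{-t x^α}. Then for every t > 0 there exists δ_0 > 0 such that for all δ > δ_0, ∫_0^∞ e^{δ/s^κ} μ_t^α(ds) = ∞. -/

import Mathlib

open MeasureTheory Real Set Filter

private lemma aux13_integrable (μ : Measure ℝ) [IsProbabilityMeasure μ] (x : ℝ) (hx : 0 ≤ x)
    (s : Set ℝ) (hms : MeasurableSet s) (hs : s ⊆ Ici 0) :
    IntegrableOn (fun u : ℝ => Real.exp (-(x * u))) s μ := by
  apply Integrable.mono' (integrable_const (1:ℝ))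
  · exact (Continuous.aestronglyMeasurable (by continuity))
  · rw [ae_restrict_iff' hms]
    apply ae_of_all
    intro u hu
    have hu0 : 0 ≤ u := hs hu
    rw [norm_eq_abs, abs_of_pos (exp_pos _), exp_le_one_iff]
    nlinarith

private lemma aux13_split (μ : Measure ℝ) [IsProbabilityMeasure μ] (x ε : ℝ) (hx : 0 ≤ x) (hε : 0 ≤ ε) :
    ∫ s in Ici (0:ℝ), Real.exp (-(x * s)) ∂μ ≤ (μ (Icc 0 ε)).toReal + Real.exp (-(x * ε)) := by
  have hun : Icc (0:ℝ) ε ∪ Ioi ε = Ici 0 := Icc_union_Ioi_eq_Ici hε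
  have hdisj : Disjoint (Icc (0:ℝ) ε) (Ioi ε) := by
    apply Set.disjoint_left.2
    intro a ha ha2
    exact absurd ha.2 (not_le.2 ha2)
  rw [← hun, setIntegral_union hdisj measurableSet_Ioi
      (aux13_integrable μ x hx _ measurableSet_Icc (by rw [← hun]; exact subset_union_left))
      (aux13_integrable μ x hx _ measurableSet_Ioi (by rw [← hun]; exact subset_union_right))]
  gcongr
  · calc ∫ s in Icc (0:ℝ) ε, Real.exp (-(x * s)) ∂μ
        ≤ ∫ _ in Icc (0:ℝ) ε, (1:ℝ) ∂μ := by
          apply setIntegral_mono_on (aux13_integrable μ x hx _ measurableSet_Icc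
              (by rw [← hun]; exact subset_union_left))
            (integrable_const _) measurableSet_Icc
          intro s hs
          rw [exp_le_one_iff]
          nlinarith [hs.1]
    _ = (μ (Icc 0 ε)).toReal := by simp; rfl
  · calc ∫ s in Ioi ε, Real.exp (-(x * s)) ∂μ
        ≤ ∫ _ in Ioi ε, Real.exp (-(x * ε)) ∂μ := by
          apply setIntegral_mono_on (aux13_integrable μ x hx _ measurableSet_Ioi (by
              intro a ha; exact le_trans hε (le_of_lt ha)))
            (integrable_const _) measurableSet_Ioi
          intro s hs
          apply exp_le_exp.2
          have : ε ≤ s := le_of_lt hs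
          nlinarith
    _ ≤ Real.exp (-(x * ε)) := by
          rw [setIntegral_const, smul_eq_mul]
          have h1 : (μ (Ioi ε)).toReal ≤ 1 := by
            have h2 : μ (Ioi ε) ≤ 1 := prob_le_one
            exact ENNReal.toReal_le_of_le_ofReal zero_le_one (by simpa using h2)
          nlinarith [exp_pos (-(x*ε)), exp_nonneg (-(x*ε)), (show μ.real (Ioi ε) = (μ (Ioi ε)).toReal from rfl)]

private lemma aux13_zero (α : ℝ) (hα0 : 0 < α) (t : ℝ) (ht : 0 < t)
    (μ : Measure ℝ) [IsProbabilityMeasure μ]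
    (hlaplace : ∀ x : ℝ, 0 ≤ x →
      ∫ s in Ici (0:ℝ), Real.exp (-(x * s)) ∂μ = Real.exp (-(t * x ^ α))) :
    μ {(0:ℝ)} = 0 := by
  by_contra h
  have hpos : 0 < (μ {(0:ℝ)}).toReal := ENNReal.toReal_pos h (measure_ne_top μ _)
  have key : ∀ x : ℝ, 0 ≤ x → (μ {(0:ℝ)}).toReal ≤ Real.exp (-(t * x ^ α)) := by
    intro x hx
    rw [← hlaplace x hx]
    have h0 : ∫ s in ({0}: Set ℝ), Real.exp (-(x * s)) ∂μ = (μ {(0:ℝ)}).toReal := by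
      rw [Measure.restrict_singleton, integral_smul_measure, integral_dirac]
      simp
    rw [← h0]
    apply setIntegral_mono_set
    · exact aux13_integrable μ x hx _ measurableSet_Ici Subset.rfl
    · exact ae_of_all _ fun u => (exp_pos _).le
    · exact HasSubset.Subset.eventuallyLE (by intro a ha; simp at ha; simp [ha])
  have htend : Filter.Tendsto (fun x : ℝ => Real.exp (-(t * x ^ α))) Filter.atTop (nhds 0) := by
    apply Real.tendsto_exp_atBot.comp
    apply tendsto_neg_atBot_iff.2
    exact (tendsto_rpow_atTop hα0).const_mul_atTop ht
  have := (htend.eventually (eventually_lt_nhds hpos)).and (Filter.eventually_ge_atTop (0:ℝ))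
  obtain ⟨x, hlt, hx0⟩ := this.exists
  exact absurd (key x hx0) (not_le.2 hlt)

theorem stmt_13 (κ α : ℝ) (hκ : 0 < κ) (hα0 : 0 < α) (hα1 : α < κ / (κ + 1))
    (t : ℝ) (ht : 0 < t)
    (μ : Measure ℝ) [IsProbabilityMeasure μ] (hsupp : μ (Iio (0:ℝ)) = 0)
    (hlaplace : ∀ x : ℝ, 0 ≤ x →
      ∫ s in Ici (0:ℝ), Real.exp (-(x * s)) ∂μ = Real.exp (-(t * x ^ α))) :
    ∃ δ₀ : ℝ, 0 < δ₀ ∧ ∀ δ : ℝ, δ₀ < δ →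
      ∫⁻ s in Ioi (0:ℝ), ENNReal.ofReal (Real.exp (δ / s ^ κ)) ∂μ = ⊤ := by
  refine ⟨1, one_pos, fun δ hδ => ?_⟩
  have hδ0 : 0 < δ := lt_trans one_pos hδ
  -- basic facts about exponents
  have hα1' : α < 1 := lt_trans hα1 ((div_lt_one (by linarith)).2 (by linarith))
  have h1α : 0 < 1 - α := by linarith
  set β : ℝ := α / (1 - α) with hβdef
  have hβ : 0 < β := div_pos hα0 h1α
  have hβκ : β < κ := by
    rw [hβdef, div_lt_iff₀ h1α]
    have := (lt_div_iff₀ (by linarith : (0:ℝ) < κ + 1)).1 hα1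
    nlinarith
  set C : ℝ := t * (2 * t) ^ β with hCdef
  have hC : 0 < C := mul_pos ht (rpow_pos_of_pos (by linarith) _)
  have hzero : μ {(0:ℝ)} = 0 := aux13_zero α hα0 t ht μ hlaplace
  -- per-y key bound
  have key : ∀ y : ℝ, 1 ≤ y → 1 ≤ C * y ^ β →
      ENNReal.ofReal (Real.exp (δ * y ^ κ - 2 * (C * y ^ β))) ≤
        ∫⁻ s in Ioi (0:ℝ), ENNReal.ofReal (Real.exp (δ / s ^ κ)) ∂μ := by
    intro y hy1 hu1
    have hy0 : 0 < y := lt_of_lt_of_le one_pos hy1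
    set ε : ℝ := 1 / y with hεdef
    have hε0 : 0 < ε := by positivity
    set x : ℝ := (2 * t * y) ^ ((1:ℝ) / (1 - α)) with hxdef
    have h2ty : 0 < 2 * t * y := by positivity
    have hx0 : 0 < x := rpow_pos_of_pos h2ty _
    have hxα : x ^ α = (2 * t * y) ^ β := by
      rw [hxdef, ← Real.rpow_mul h2ty.le]
      congr 1
      rw [hβdef]
      field_simp
    have hx1α : x ^ (1 - α) = 2 * t * y := by
      rw [hxdef, ← Real.rpow_mul h2ty.le, one_div_mul_cancel (ne_of_gt h1α), Real.rpow_one]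
    have hxε : x * ε = 2 * (t * x ^ α) := by
      have hxsplit : x = x ^ α * x ^ (1 - α) := by
        rw [← Real.rpow_add hx0]
        norm_num
      have heq : x = x ^ α * (2 * t * y) := by rw [← hx1α]; exact hxsplit
      nth_rewrite 1 [heq]
      rw [hεdef]
      field_simp
    set u : ℝ := t * x ^ α with hudef
    have huC : u = C * y ^ β := by
      rw [hudef, hxα, Real.mul_rpow (by positivity) hy0.le, hCdef, mul_assoc]
    have hu0 : (1:ℝ) ≤ u := by rw [huC]; exact hu1
    -- measure lower bound
    have hsplit := aux13_split μ x ε hx0.le hε0.le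
    rw [hlaplace x hx0.le] at hsplit
    have hm : Real.exp (-(2 * u)) ≤ (μ (Icc 0 ε)).toReal := by
      have he1 : Real.exp (-(t * x ^ α)) = Real.exp (-(2*u)) * Real.exp u := by
        rw [← Real.exp_add]; congr 1; rw [hudef]; ring
      have he2 : Real.exp (-(x * ε)) = Real.exp (-(2*u)) := by rw [hxε]
      rw [he1, he2] at hsplit
      nlinarith [Real.add_one_le_exp u, Real.exp_pos (-(2*u))]
    have hmeas : ENNReal.ofReal (Real.exp (-(2 * u))) ≤ μ (Ioc 0 ε) := by
      calc ENNReal.ofReal (Real.exp (-(2 * u))) ≤ ENNReal.ofReal ((μ (Icc 0 ε)).toReal) :=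
            ENNReal.ofReal_le_ofReal hm
        _ = μ (Icc 0 ε) := ENNReal.ofReal_toReal (measure_ne_top μ _)
        _ ≤ μ ({0} ∪ Ioc 0 ε) := by
            apply measure_mono
            intro a ha
            rcases eq_or_lt_of_le ha.1 with h | h
            · exact Or.inl (by simp [← h])
            · exact Or.inr ⟨h, ha.2⟩
        _ ≤ μ {(0:ℝ)} + μ (Ioc 0 ε) := measure_union_le _ _
        _ = μ (Ioc 0 ε) := by rw [hzero, zero_add]
    -- lintegral lower bound
    have hconst : ∀ s ∈ Ioc (0:ℝ) ε, ENNReal.ofReal (Real.exp (δ * y ^ κ)) ≤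
        ENNReal.ofReal (Real.exp (δ / s ^ κ)) := by
      intro s hs
      apply ENNReal.ofReal_le_ofReal
      apply Real.exp_le_exp.2
      have hsκ : s ^ κ ≤ ε ^ κ := Real.rpow_le_rpow hs.1.le hs.2 hκ.le
      have hsκ0 : 0 < s ^ κ := Real.rpow_pos_of_pos hs.1 _
      have hεκ : ε ^ κ = 1 / y ^ κ := by
        rw [hεdef, Real.div_rpow zero_le_one hy0.le, Real.one_rpow]
      calc δ * y ^ κ = δ / ε ^ κ := by
            rw [hεκ]
            field_simp
        _ ≤ δ / s ^ κ := by
            apply div_le_div_of_nonneg_left hδ0.le hsκ0 hsκ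
    calc ENNReal.ofReal (Real.exp (δ * y ^ κ - 2 * (C * y ^ β)))
        = ENNReal.ofReal (Real.exp (δ * y ^ κ) * Real.exp (-(2 * u))) := by
          rw [← Real.exp_add, huC]; ring_nf
      _ = ENNReal.ofReal (Real.exp (δ * y ^ κ)) * ENNReal.ofReal (Real.exp (-(2 * u))) :=
          ENNReal.ofReal_mul (Real.exp_nonneg _)
      _ ≤ ENNReal.ofReal (Real.exp (δ * y ^ κ)) * μ (Ioc 0 ε) := by
          exact mul_le_mul_right hmeas _
      _ = ∫⁻ _ in Ioc (0:ℝ) ε, ENNReal.ofReal (Real.exp (δ * y ^ κ)) ∂μ := by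
          rw [setLIntegral_const]
      _ ≤ ∫⁻ s in Ioc (0:ℝ) ε, ENNReal.ofReal (Real.exp (δ / s ^ κ)) ∂μ := by
          apply setLIntegral_mono (by fun_prop) hconst
      _ ≤ ∫⁻ s in Ioi (0:ℝ), ENNReal.ofReal (Real.exp (δ / s ^ κ)) ∂μ :=
          lintegral_mono_set Ioc_subset_Ioi_self
  -- conclusion via unboundedness
  apply ENNReal.eq_top_of_forall_nnreal_le
  intro r
  have hF : Tendsto (fun y : ℝ => δ * y ^ κ - 2 * (C * y ^ β)) atTop atTop := by
    have h1 : Tendsto (fun y : ℝ => y ^ β * (δ * y ^ (κ - β) - 2 * C)) atTop atTop := by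
      apply Tendsto.atTop_mul_atTop₀ (tendsto_rpow_atTop hβ)
      apply tendsto_atTop_add_const_right
      exact (tendsto_rpow_atTop (by linarith)).const_mul_atTop hδ0
    apply h1.congr'
    filter_upwards [eventually_gt_atTop (0:ℝ)] with y hy
    have hyy : y ^ β * y ^ (κ - β) = y ^ κ := by
      rw [← Real.rpow_add hy]; ring_nf
    rw [mul_sub]
    linear_combination δ * hyy
  have hexp : Tendsto (fun y : ℝ => Real.exp (δ * y ^ κ - 2 * (C * y ^ β))) atTop atTop :=
    Real.tendsto_exp_atTop.comp hF
  have hev := (eventually_ge_atTop (1:ℝ)).and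
    ((((tendsto_rpow_atTop hβ).const_mul_atTop hC).eventually_ge_atTop 1).and
      (hexp.eventually_ge_atTop (r:ℝ)))
  obtain ⟨y, hy1, hyu, hyr⟩ := hev.exists
  calc (r : ENNReal) = ENNReal.ofReal (r:ℝ) := (ENNReal.ofReal_coe_nnreal).symm
    _ ≤ ENNReal.ofReal (Real.exp (δ * y ^ κ - 2 * (C * y ^ β))) := ENNReal.ofReal_le_ofReal hyr
    _ ≤ _ := key y hy1 hyu
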